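/- For a (p,q)-shuffle s with i ∈ s(⌐) and j ∈ s(¬), the flip maps satisfy β_i(α_i(s)) = s and α_j(β_j(s)) = s; moreover i ∈ α_i(s)(¬) and j ∈ β_j(s)(⌐). -/

import Mathlib

def IsShuffle (p q : ℕ) (s : Fin (q + 2) → ℕ) : Prop :=
  s 0 = 0 ∧ s (Fin.last (q + 1)) = p ∧ ∀ i : Fin (q + 1), s i.castSucc ≤ s i.succ

/-- `s(⌐)`: `i = s_k + k - 1` with `s_{k-1} < s_k` for some `1 ≤ k ≤ q+1`. -/
def sL (p q : ℕ) (s : Fin (q + 2) → ℕ) : Set ℕ :=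
  {i | 0 < i ∧ i < p + q ∧
     ∃ k : Fin (q + 1), i = s k.succ + (k : ℕ) ∧ s k.castSucc < s k.succ}

/-- `s(¬)`: `i = s_k + k` with `s_k < s_{k+1}` for some `0 ≤ k ≤ q`. -/
def sN (p q : ℕ) (s : Fin (q + 2) → ℕ) : Set ℕ :=
  {i | 0 < i ∧ i < p + q ∧
     ∃ k : Fin (q + 1), i = s k.castSucc + (k : ℕ) ∧ s k.castSucc < s k.succ}

/-- For a `(p,q)`-shuffle `s` with `i ∈ s(⌐)` (witnessed by the index `k+1`, so
`i = s_{k+1} + k` and `s_k < s_{k+1}`), the corner flip `α_i(s)` (decreasing `s_{k+1}`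
by one) is again a shuffle, `i ∈ α_i(s)(¬)`, and `β_i(α_i(s)) = s`; symmetrically for
`j ∈ s(¬)` the flip `β_j(s)` is a shuffle, `j ∈ β_j(s)(⌐)`, and `α_j(β_j(s)) = s`. -/
theorem flip_inverse (p q : ℕ) (s : Fin (q + 2) → ℕ) (hs : IsShuffle p q s) :
    (∀ (k : Fin (q + 1)) (i : ℕ), i = s k.succ + (k : ℕ) → s k.castSucc < s k.succ →
      0 < i → i < p + q →
      IsShuffle p q (Function.update s k.succ (s k.succ - 1)) ∧
      i ∈ sN p q (Function.update s k.succ (s k.succ - 1)) ∧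
      Function.update (Function.update s k.succ (s k.succ - 1)) k.succ
        ((Function.update s k.succ (s k.succ - 1)) k.succ + 1) = s) ∧
    (∀ (l : Fin (q + 1)) (j : ℕ), j = s l.castSucc + (l : ℕ) → s l.castSucc < s l.succ →
      0 < j → j < p + q →
      IsShuffle p q (Function.update s l.castSucc (s l.castSucc + 1)) ∧
      j ∈ sL p q (Function.update s l.castSucc (s l.castSucc + 1)) ∧
      Function.update (Function.update s l.castSucc (s l.castSucc + 1)) l.castSucc
        ((Function.update s l.castSucc (s l.castSucc + 1)) l.castSucc - 1) = s) := by
  obtain ⟨h0, hlast, hmono⟩ := hs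
  constructor
  · intro k i hi hlt hi0 hi2
    have h1 : 1 ≤ s k.succ := by omega
    have hkq : (k : ℕ) < q := by
      by_contra h
      have hk : (k : ℕ) = q := by have := k.isLt; omega
      have : k.succ = Fin.last (q + 1) := by
        apply Fin.ext; simp [hk]
      rw [this, hlast] at hi
      omega
    have hne : k.castSucc ≠ k.succ := by
      simp [Fin.ext_iff]
    refine ⟨⟨?_, ?_, ?_⟩, ?_, ?_⟩
    · rw [Function.update_of_ne (Fin.succ_ne_zero k).symm]; exact h0
    · rw [Function.update_of_ne (by simp [Fin.ext_iff]; omega)]; exact hlast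
    · intro m
      rcases eq_or_ne m k with rfl | hmk
      · rw [Function.update_of_ne hne, Function.update_self]
        omega
      · have hms : m.succ ≠ k.succ := by
          simp [Fin.ext_iff]; simp [Fin.ext_iff] at hmk; omega
        rw [Function.update_of_ne hms]
        rcases eq_or_ne m.castSucc k.succ with hmc | hmc
        · rw [hmc, Function.update_self]
          have := hmono m
          rw [hmc] at this
          omega
        · rw [Function.update_of_ne hmc]; exact hmono m
    · refine ⟨hi0, hi2, ⟨(k : ℕ) + 1, by omega⟩, ?_, ?_⟩
      · have hc : (⟨(k : ℕ) + 1, by omega⟩ : Fin (q + 1)).castSucc = k.succ := by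
          simp [Fin.ext_iff]
        rw [hc, Function.update_self]
        simp; omega
      · have hc : (⟨(k : ℕ) + 1, by omega⟩ : Fin (q + 1)).castSucc = k.succ := by
          simp [Fin.ext_iff]
        have hsne : (⟨(k : ℕ) + 1, by omega⟩ : Fin (q + 1)).succ ≠ k.succ := by
          simp [Fin.ext_iff]
        rw [hc, Function.update_self, Function.update_of_ne hsne]
        have := hmono ⟨(k : ℕ) + 1, by omega⟩
        rw [hc] at this
        omega
    · rw [Function.update_self, Function.update_idem]
      have : s k.succ - 1 + 1 = s k.succ := by omega
      rw [this, Function.update_eq_self]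
  · intro l j hj hlt hj0 hj2
    have hl : 0 < (l : ℕ) := by
      by_contra h
      have hl0 : l.castSucc = 0 := by ext; simpa using (by omega : (l : ℕ) = 0)
      rw [hl0, h0] at hj
      omega
    have hne : l.succ ≠ l.castSucc := by
      simp [Fin.ext_iff]
    refine ⟨⟨?_, ?_, ?_⟩, ?_, ?_⟩
    · rw [Function.update_of_ne (by simp [Fin.ext_iff]; omega)]; exact h0
    · rw [Function.update_of_ne (by simp [Fin.ext_iff]; have := l.isLt; omega)]
      exact hlast
    · intro m
      rcases eq_or_ne m l with rfl | hml
      · rw [Function.update_self, Function.update_of_ne hne]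
        omega
      · have hmc : m.castSucc ≠ l.castSucc := by
          simp [Fin.ext_iff]; simp [Fin.ext_iff] at hml; omega
        rw [Function.update_of_ne hmc]
        rcases eq_or_ne m.succ l.castSucc with hms | hms
        · rw [hms, Function.update_self]
          have := hmono m
          rw [hms] at this
          omega
        · rw [Function.update_of_ne hms]; exact hmono m
    · refine ⟨hj0, hj2, ⟨(l : ℕ) - 1, by omega⟩, ?_, ?_⟩
      · have hc : (⟨(l : ℕ) - 1, by omega⟩ : Fin (q + 1)).succ = l.castSucc := by
          simp [Fin.ext_iff]; omega
        rw [hc, Function.update_self]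
        simp; omega
      · have hc : (⟨(l : ℕ) - 1, by omega⟩ : Fin (q + 1)).succ = l.castSucc := by
          simp [Fin.ext_iff]; omega
        have hcne : (⟨(l : ℕ) - 1, by omega⟩ : Fin (q + 1)).castSucc ≠ l.castSucc := by
          simp [Fin.ext_iff]; omega
        rw [hc, Function.update_self, Function.update_of_ne hcne]
        have := hmono ⟨(l : ℕ) - 1, by omega⟩
        rw [hc] at this
        omega
    · rw [Function.update_self, Function.update_idem]
      have : s l.castSucc + 1 - 1 = s l.castSucc := by omega
      rw [this, Function.update_eq_self]
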